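/- Let N ≥ 1, r ≥ 2, 0 < λ < 1/r³, 0 < δ < λ/r, d = ⌊δN⌋, l = ⌊λN⌋, and let D ⊆ {1,...,d} satisfy the property that d_0 + ... + d_{r-1} = r·d_r with d_i ∈ D implies all d_i equal. For b ∈ D define A_b = {i·l + b : 0 ≤ i ≤ r−1} ∪ {N − C(r,2)·l − r·b} ⊆ Z_N, and A = ∪_{b∈D} A_b. Then for any r+1 distinct elements a_1, ..., a_{r+1} of A, Σ a_i ≡ 0 (mod N) if and only if {a_1, ..., a_{r+1}} = A_b for some b ∈ D. -/

import Mathlib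

/-- Lemma 4 of the paper: with `A = ⋃_{b ∈ D} A_b ⊆ ZMod N`, any `r+1` distinct elements
of `A` sum to `0` in `ZMod N` iff they form one of the transversals `A_b`. -/
theorem statement11 (N r : ℕ) (hN : 1 ≤ N) (hr : 2 ≤ r) (lam del : ℝ)
    (hlam0 : 0 < lam) (hlam1 : lam < 1 / (r : ℝ) ^ 3)
    (hdel0 : 0 < del) (hdel1 : del < lam / r)
    (d l : ℕ) (hd : d = ⌊del * N⌋₊) (hl : l = ⌊lam * N⌋₊)
    (D : Finset ℕ) (hD : D ⊆ Finset.Icc 1 d)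
    (hprop : ∀ f : ℕ → ℕ, (∀ i ≤ r, f i ∈ D) →
      (∑ i ∈ Finset.range r, f i) = r * f r → ∀ i ≤ r, f i = f 0)
    (Ab : ℕ → Finset (ZMod N))
    (hAb : ∀ bb : ℕ, Ab bb =
      ((Finset.range r).image fun i => ((i * l + bb : ℕ) : ZMod N)) ∪
        {(N : ZMod N) - ((r.choose 2 * l : ℕ) : ZMod N) - ((r * bb : ℕ) : ZMod N)})
    (A : Finset (ZMod N)) (hA : A = D.biUnion Ab)
    (a : Fin (r + 1) → ZMod N) (hinj : Function.Injective a) (ha : ∀ i, a i ∈ A) :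
    (∑ i, a i) = 0 ↔ ∃ bb ∈ D, Finset.univ.image a = Ab bb := by
  classical
  have hNZ : NeZero N := ⟨by omega⟩
  set C := r.choose 2 with hCdef
  have hC2' : 2 * C + r = r * r := by
    obtain ⟨r', rfl⟩ : ∃ r', r = r' + 1 := ⟨r - 1, by omega⟩
    obtain ⟨m, hm⟩ := Nat.even_mul_succ_self r'
    have h1 : C = m := by
      rw [hCdef, Nat.choose_two_right]
      simp only [Nat.add_sub_cancel]
      rw [Nat.mul_comm, hm]; omega
    have h2 : (r' + 1) * (r' + 1) = (m + m) + (r' + 1) := by rw [← hm]; ring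
    omega
  -- trivial case: D empty
  by_cases hDne : D = ∅
  · exact absurd (ha 0) (by simp [hA, hDne])
  obtain ⟨bex, hbex⟩ := Finset.nonempty_iff_ne_empty.2 hDne
  have hd1 : 1 ≤ d :=
    le_trans (Finset.mem_Icc.mp (hD hbex)).1 (Finset.mem_Icc.mp (hD hbex)).2
  -- numeric facts
  have hrpos : (0:ℝ) < r := by positivity
  have hrd : r * d ≤ l := by
    rw [hl]
    apply Nat.le_floor
    have h1 : (d:ℝ) ≤ del * N := by rw [hd]; exact Nat.floor_le (by positivity)
    have h2 : del * r < lam := (lt_div_iff₀ hrpos).mp hdel1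
    have h3 : (0:ℝ) ≤ (N:ℝ) := by positivity
    push_cast
    nlinarith [mul_le_mul_of_nonneg_left h1 (le_of_lt hrpos)]
  have hr3l : r ^ 3 * l < N := by
    have h1 : (l:ℝ) ≤ lam * N := by rw [hl]; exact Nat.floor_le (by positivity)
    have h2 : lam * (r:ℝ)^3 < 1 := by
      rw [lt_div_iff₀ (by positivity)] at hlam1; nlinarith [hlam1]
    have hN1 : (1:ℝ) ≤ N := by exact_mod_cast hN
    have : ((r^3 * l : ℕ):ℝ) < N := by
      push_cast
      nlinarith [mul_le_mul_of_nonneg_left h1 (by positivity : (0:ℝ) ≤ (r:ℝ)^3)]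
    exact_mod_cast this
  have hdl : d ≤ l := le_trans (Nat.le_mul_of_pos_left d (by omega)) hrd
  have hlr : r ≤ l := le_trans (Nat.le_mul_of_pos_right r hd1) hrd
  have hl1 : 1 ≤ l := by omega
  have hrlN : r * l < N := by
    have : r * l ≤ r^3 * l := Nat.mul_le_mul_right l (by nlinarith [hr])
    omega
  -- key size bound for the special element
  have hkey : ∀ bb, bb ≤ d → r * l + (C * l + r * bb) < N := by
    intro bb hbb
    have h1 : r * bb ≤ l := le_trans (Nat.mul_le_mul_left r hbb) hrd
    have e1 : 2 * (C * l) + r * l = (r * r) * l := by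
      calc 2 * (C * l) + r * l = (2 * C + r) * l := by ring
        _ = (r * r) * l := by rw [hC2']
    have ha1 : 2 * r ≤ r * r := Nat.mul_le_mul_right r hr
    have ha2 : 2 * (r * r) ≤ r * (r * r) := Nat.mul_le_mul_right (r * r) hr
    have e2 : (r * r) * l + 3 * (r * l) ≤ 2 * (r ^ 3 * l) := by
      have hc : r * r + 3 * r ≤ 2 * r ^ 3 := by
        have e3 : r ^ 3 = r * (r * r) := by ring
        omega
      calc (r * r) * l + 3 * (r * l) = (r * r + 3 * r) * l := by ring
        _ ≤ (2 * r ^ 3) * l := Nat.mul_le_mul_right l hc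
        _ = 2 * (r ^ 3 * l) := by ring
    have h4 : l ≤ r * l := Nat.le_mul_of_pos_left l (by omega)
    omega
  have hsmall_lt : ∀ c bb, c < r → bb ≤ d → c * l + bb ≤ r * l := by
    intro c bb hc hbb
    calc c * l + bb ≤ c * l + l := by omega
      _ = (c + 1) * l := by ring
      _ ≤ r * l := Nat.mul_le_mul_right l (by omega)
  have hsmall_val : ∀ c bb, c < r → bb ≤ d → (((c * l + bb : ℕ)) : ZMod N).val = c * l + bb :=
    fun c bb hc hbb => ZMod.val_cast_of_lt (lt_of_le_of_lt (hsmall_lt c bb hc hbb) hrlN)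
  have hspec_eq : ∀ bb, bb ≤ d →
      (N : ZMod N) - ((C * l : ℕ) : ZMod N) - ((r * bb : ℕ) : ZMod N)
        = ((N - (C * l + r * bb) : ℕ) : ZMod N) := by
    intro bb hbb
    have hle : C * l + r * bb ≤ N := by have := hkey bb hbb; omega
    rw [Nat.cast_sub hle]
    push_cast
    ring
  have hspec_val : ∀ bb, 1 ≤ bb → bb ≤ d →
      (((N - (C * l + r * bb) : ℕ)) : ZMod N).val = N - (C * l + r * bb) := by
    intro bb h1 h2
    have h3 : 0 < r * bb := Nat.mul_pos (by omega) h1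
    exact ZMod.val_cast_of_lt (by omega)
  have hspec_big : ∀ bb, 1 ≤ bb → bb ≤ d → r * l < N - (C * l + r * bb) := by
    intro bb _ hbb; have := hkey bb hbb; omega
  have hgauss : ∀ bb, ∑ i ∈ Finset.range r, (i * l + bb) = C * l + r * bb := by
    intro bb
    rw [Finset.sum_add_distrib, Finset.sum_const, Finset.card_range, ← Finset.sum_mul,
      Finset.sum_range_id, ← Nat.choose_two_right, ← hCdef, smul_eq_mul]
  constructor
  · intro hsum
    -- decompose membership
    have hmem : ∀ i, ∃ bb, bb ∈ D ∧
        ((∃ cc, cc < r ∧ a i = ((cc * l + bb : ℕ) : ZMod N)) ∨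
          a i = (N : ZMod N) - ((C * l : ℕ) : ZMod N) - ((r * bb : ℕ) : ZMod N)) := by
      intro i
      have h := ha i
      rw [hA, Finset.mem_biUnion] at h
      obtain ⟨bb, hbbD, hbbA⟩ := h
      rw [hAb, Finset.mem_union] at hbbA
      refine ⟨bb, hbbD, ?_⟩
      rcases hbbA with h | h
      · obtain ⟨cc, hcc, hcc2⟩ := Finset.mem_image.mp h
        exact Or.inl ⟨cc, Finset.mem_range.mp hcc, hcc2.symm⟩
      · exact Or.inr (Finset.mem_singleton.mp h)
    choose b hbD hform using hmem
    have hb1 : ∀ i, 1 ≤ b i := fun i => (Finset.mem_Icc.mp (hD (hbD i))).1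
    have hbd : ∀ i, b i ≤ d := fun i => (Finset.mem_Icc.mp (hD (hbD i))).2
    obtain ⟨S, hSdef⟩ : ∃ S, S = Finset.univ.filter (fun i : Fin (r+1) => r * l < (a i).val) :=
      ⟨_, rfl⟩
    obtain ⟨T, hTdef⟩ : ∃ T, T = Finset.univ.filter (fun i : Fin (r+1) => ¬ r * l < (a i).val) :=
      ⟨_, rfl⟩
    have hST : ∀ i, i ∈ T ↔ i ∉ S := by intro i; simp [hSdef, hTdef]
    have hSform : ∀ i ∈ S, (a i).val = N - (C * l + r * b i) := by
      intro i hi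
      have hi2 : i ∈ Finset.univ.filter (fun i : Fin (r+1) => r * l < (a i).val) := by
        rw [← hSdef]; exact hi
      have hi' : r * l < (a i).val := (Finset.mem_filter.mp hi2).2
      rcases hform i with ⟨cc, hc, hcc⟩ | hcc
      · rw [hcc, hsmall_val cc _ hc (hbd i)] at hi'
        exact absurd hi' (not_lt.mpr (hsmall_lt cc _ hc (hbd i)))
      · rw [hcc, hspec_eq _ (hbd i), hspec_val _ (hb1 i) (hbd i)]
    have hTform : ∀ i, i ∉ S → ∃ cc, cc < r ∧ (a i).val = cc * l + b i := by
      intro i hi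
      have hi' : ¬ r * l < (a i).val := by
        intro h
        exact hi (by rw [hSdef]; exact Finset.mem_filter.mpr ⟨Finset.mem_univ i, h⟩)
      rcases hform i with ⟨cc, hc, hcc⟩ | hcc
      · exact ⟨cc, hc, by rw [hcc, hsmall_val cc _ hc (hbd i)]⟩
      · exact absurd (by
          rw [hcc, hspec_eq _ (hbd i), hspec_val _ (hb1 i) (hbd i)]
          exact hspec_big _ (hb1 i) (hbd i)) hi'
    have hTall : ∀ i, ∃ cc, i ∈ S ∨ (cc < r ∧ (a i).val = cc * l + b i) := by
      intro i
      by_cases hi : i ∈ S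
      · exact ⟨0, Or.inl hi⟩
      · obtain ⟨cc, h1, h2⟩ := hTform i hi
        exact ⟨cc, Or.inr ⟨h1, h2⟩⟩
    choose c hcS using hTall
    have hcr : ∀ i, i ∉ S → c i < r ∧ (a i).val = c i * l + b i := fun i hi =>
      (hcS i).resolve_left hi
    have hcard : S.card + T.card = r + 1 := by
      rw [hSdef, hTdef, Finset.card_filter_add_card_filter_not, Finset.card_univ,
        Fintype.card_fin]
    obtain ⟨k, hk⟩ : ∃ x, x = S.card := ⟨_, rfl⟩
    obtain ⟨BS, hBS⟩ : ∃ x, x = ∑ i ∈ S, b i := ⟨_, rfl⟩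
    obtain ⟨BT, hBT⟩ : ∃ x, x = ∑ i ∈ T, b i := ⟨_, rfl⟩
    obtain ⟨CT, hCT⟩ : ∃ x, x = ∑ i ∈ T, c i := ⟨_, rfl⟩
    obtain ⟨M, hM⟩ : ∃ x, x = ∑ i, (a i).val := ⟨_, rfl⟩
    have hcard' : k + T.card = r + 1 := by rw [hk]; exact hcard
    have hdvd : N ∣ M := by
      rw [← ZMod.natCast_eq_zero_iff, hM]
      calc ((∑ i, (a i).val : ℕ) : ZMod N) = ∑ i, (((a i).val : ℕ) : ZMod N) :=
            Nat.cast_sum _ _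
        _ = ∑ i, a i := Finset.sum_congr rfl (fun i _ => ZMod.natCast_rightInverse (a i))
        _ = 0 := hsum
    have hsplit : (∑ i ∈ S, (a i).val) + (∑ i ∈ T, (a i).val) = M := by
      rw [hSdef, hTdef, hM]
      exact Finset.sum_filter_add_sum_filter_not _ _ _
    have hSsum : (∑ i ∈ S, (a i).val) + (k * (C * l) + r * BS) = k * N := by
      have h1 : ∀ i ∈ S, (a i).val + (C * l + r * b i) = N := by
        intro i hi
        rw [hSform i hi]
        have h2 := hkey (b i) (hbd i)
        omega
      have h2 : ∑ i ∈ S, ((a i).val + (C * l + r * b i)) = ∑ i ∈ S, N :=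
        Finset.sum_congr rfl h1
      rw [Finset.sum_add_distrib, Finset.sum_add_distrib, Finset.sum_const, Finset.sum_const,
        smul_eq_mul, smul_eq_mul, ← Finset.mul_sum] at h2
      rw [hk, hBS]
      exact h2
    have hTsum : ∑ i ∈ T, (a i).val = CT * l + BT := by
      have h1 : ∑ i ∈ T, (a i).val = ∑ i ∈ T, (c i * l + b i) :=
        Finset.sum_congr rfl (fun i hi => (hcr i ((hST i).mp hi)).2)
      rw [h1, Finset.sum_add_distrib, ← Finset.sum_mul, ← hCT, ← hBT]
    have hkle : k ≤ r + 1 := by omega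
    have hBS1 : k ≤ BS := by
      rw [hk, hBS]
      simpa using Finset.card_nsmul_le_sum S b 1 (fun i _ => hb1 i)
    have hBSd : BS ≤ k * d := by
      rw [hk, hBS]
      simpa using Finset.sum_le_card_nsmul S b d (fun i _ => hbd i)
    have hBT1 : T.card ≤ BT := by
      rw [hBT]
      simpa using Finset.card_nsmul_le_sum T b 1 (fun i _ => hb1 i)
    have hBTd : BT ≤ T.card * d := by
      rw [hBT]
      simpa using Finset.sum_le_card_nsmul T b d (fun i _ => hbd i)
    have hCTr : CT + T.card ≤ T.card * r := by
      have h1 := Finset.sum_le_card_nsmul T (fun i => c i + 1) r (fun i hi => by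
        show c i + 1 ≤ r
        have := (hcr i ((hST i).mp hi)).1; omega)
      have h2 : ∑ i ∈ T, (c i + 1) = CT + T.card := by
        rw [Finset.sum_add_distrib, Finset.sum_const, smul_eq_mul, mul_one, hCT]
      rw [h2, smul_eq_mul] at h1
      exact h1
    have hPN : k * (C * l) + r * BS < N := by
      have h1 : r * BS ≤ k * l := by
        calc r * BS ≤ r * (k * d) := Nat.mul_le_mul_left r hBSd
          _ = k * (r * d) := by ring
          _ ≤ k * l := Nat.mul_le_mul_left k hrd
      have h2 : k * (C * l) + k * l = k * ((C + 1) * l) := by ring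
      have h3 : k * ((C + 1) * l) ≤ (r + 1) * ((C + 1) * l) := Nat.mul_le_mul_right _ hkle
      have h4 : 2 * ((r + 1) * ((C + 1) * l)) ≤ 2 * (r ^ 3 * l) := by
        have e : (2 * C + r) * (r + 1) = (r * r) * (r + 1) := by rw [hC2']
        have hr3 : r + 2 ≤ r ^ 3 := by
          have a1 : 2 * r ≤ r * r := Nat.mul_le_mul_right r hr
          have a2 : 2 * (r * r) ≤ r * (r * r) := Nat.mul_le_mul_right (r * r) hr
          have e3 : r ^ 3 = r * (r * r) := by ring
          omega
        have e6 : 2 * (C * r) + 2 * C + (r * r + r) = r * (r * r) + r * r := by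
          calc 2 * (C * r) + 2 * C + (r * r + r) = (2 * C + r) * (r + 1) := by ring
            _ = (r * r) * (r + 1) := by rw [hC2']
            _ = r * (r * r) + r * r := by ring
        have hr3' : r + 2 ≤ r * (r * r) := by
          have e3 : r ^ 3 = r * (r * r) := by ring
          omega
        have hc : 2 * ((r + 1) * (C + 1)) ≤ 2 * r ^ 3 := by
          have e4 : 2 * ((r + 1) * (C + 1)) = 2 * (C * r) + 2 * C + 2 * r + 2 := by ring
          have e5 : 2 * r ^ 3 = 2 * (r * (r * r)) := by ring
          omega
        calc 2 * ((r + 1) * ((C + 1) * l)) = (2 * ((r + 1) * (C + 1))) * l := by ring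
          _ ≤ (2 * r ^ 3) * l := Nat.mul_le_mul_right l hc
          _ = 2 * (r ^ 3 * l) := by ring
      omega
    have hQN : CT * l + BT < N := by
      have h1 : ∑ i ∈ T, (a i).val ≤ T.card * (r * l) := by
        simpa using Finset.sum_le_card_nsmul T _ (r * l) (fun i hi => by
          obtain ⟨h2, h3⟩ := hcr i ((hST i).mp hi)
          rw [h3]; exact hsmall_lt _ _ h2 (hbd i))
      have h2 : T.card * (r * l) ≤ (r + 1) * (r * l) := Nat.mul_le_mul_right _ (by omega)
      have h4 : (r + 1) * (r * l) ≤ r ^ 3 * l := by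
        have a1 : 2 * r ≤ r * r := Nat.mul_le_mul_right r hr
        have a2 : 2 * (r * r) ≤ r * (r * r) := Nat.mul_le_mul_right (r * r) hr
        have e3 : r ^ 3 = r * (r * r) := by ring
        have hc : (r + 1) * r ≤ r ^ 3 := by
          have e4 : (r + 1) * r = r * r + r := by ring
          omega
        calc (r + 1) * (r * l) = ((r + 1) * r) * l := by ring
          _ ≤ r ^ 3 * l := Nat.mul_le_mul_right l hc
      rw [← hTsum]
      omega
    obtain ⟨k', hk'⟩ := hdvd
    have heq : M + (k * (C * l) + r * BS) = k * N + (CT * l + BT) := by omega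
    have hPQ : k * (C * l) + r * BS = CT * l + BT := by
      have h6 : N * k = k * N := Nat.mul_comm N k
      rcases lt_trichotomy k' k with hlt | hE | hgt
      · exfalso
        have h5 : N * k' + N ≤ N * k := by
          calc N * k' + N = N * (k' + 1) := by ring
            _ ≤ N * k := Nat.mul_le_mul_left N hlt
        omega
      · rw [hE] at hk'
        omega
      · exfalso
        have h5 : N * k + N ≤ N * k' := by
          calc N * k + N = N * (k + 1) := by ring
            _ ≤ N * k' := Nat.mul_le_mul_left N hgt
        omega
    have hk1 : 1 ≤ k := by
      by_contra hcon
      have hk0 : k = 0 := by omega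
      have hS0 : S = ∅ := Finset.card_eq_zero.mp (by omega)
      have hBS0 : BS = 0 := by rw [hBS, hS0]; simp
      rw [hk0, hBS0] at hPQ
      omega
    have hk2 : k < 2 := by
      by_contra hcon
      push_neg at hcon
      have hz : (k : ℤ) * ((C : ℤ) * (l : ℤ)) + (r : ℤ) * (BS : ℤ)
          = (CT : ℤ) * (l : ℤ) + (BT : ℤ) := by exact_mod_cast hPQ
      have f1 : (CT : ℤ) + (T.card : ℤ) ≤ (T.card : ℤ) * r := by exact_mod_cast hCTr
      have f2 : (BT : ℤ) ≤ (T.card : ℤ) * d := by exact_mod_cast hBTd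
      have f3 : (r : ℤ) * d ≤ l := by exact_mod_cast hrd
      have f4 : 2 * (C : ℤ) + r = r * r := by exact_mod_cast hC2'
      have f5 : (k : ℤ) + (T.card : ℤ) = r + 1 := by exact_mod_cast hcard'
      have f6 : (2 : ℤ) ≤ k := by exact_mod_cast hcon
      have f8 : (2 : ℤ) ≤ r := by exact_mod_cast hr
      have f9 : (r : ℤ) ≤ l := by exact_mod_cast hlr
      have ht0 : (0 : ℤ) ≤ (T.card : ℤ) := Int.natCast_nonneg _
      have hC0 : (0 : ℤ) ≤ (C : ℤ) := Int.natCast_nonneg _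
      have hl0 : (0 : ℤ) ≤ (l : ℤ) := Int.natCast_nonneg _
      have hBS0 : (0 : ℤ) ≤ (BS : ℤ) := Int.natCast_nonneg _
      have hr0 : (0 : ℤ) ≤ (r : ℤ) := Int.natCast_nonneg _
      have ft : (T.card : ℤ) ≤ r - 1 := by linarith only [f5, f6]
      have p0 : 2 * (r:ℤ) * ((k:ℤ) * ((C:ℤ) * l)) + 2 * r * (r * BS)
          = 2 * r * ((CT:ℤ) * l) + 2 * r * BT := by linear_combination (2 * (r:ℤ)) * hz
      have hrCl : (0:ℤ) ≤ 2 * (r:ℤ) * ((C:ℤ) * l) :=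
        mul_nonneg (mul_nonneg (by norm_num) hr0) (mul_nonneg hC0 hl0)
      have p1 : 4 * (r:ℤ) * ((C:ℤ) * l) ≤ 2 * r * ((k:ℤ) * ((C:ℤ) * l)) := by
        have h := mul_le_mul_of_nonneg_right f6 hrCl
        linarith only [h]
      have p2 : 4 * (r:ℤ) * ((C:ℤ) * l) = ((r:ℤ) * r - r) * (2 * r * l) := by
        linear_combination (2 * (r:ℤ) * l) * f4
      have hrl0 : (0:ℤ) ≤ 2 * (r:ℤ) * l := mul_nonneg (mul_nonneg (by norm_num) hr0) hl0
      have f1' : (CT:ℤ) ≤ (T.card:ℤ) * r - T.card := by linarith only [f1]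
      have p3 : 2 * (r:ℤ) * ((CT:ℤ) * l) ≤ ((T.card:ℤ) * r - T.card) * (2 * r * l) := by
        have h := mul_le_mul_of_nonneg_right f1' hrl0
        linarith only [h]
      have q1 : (T.card:ℤ) * r - T.card ≤ ((r:ℤ) - 1) * (r - 1) := by
        have h := mul_le_mul_of_nonneg_right ft (show (0:ℤ) ≤ (r:ℤ) - 1 by linarith only [f8])
        linarith only [h]
      have p4 : ((T.card:ℤ) * r - T.card) * (2 * r * l) ≤ ((r:ℤ) - 1) * (r - 1) * (2 * r * l) :=
        mul_le_mul_of_nonneg_right q1 hrl0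
      have p5 : 2 * (r:ℤ) * (BT:ℤ) ≤ 2 * ((T.card:ℤ) * l) := by
        have h1 := mul_le_mul_of_nonneg_left f2 hr0
        have h2 := mul_le_mul_of_nonneg_left f3 ht0
        linarith only [h1, h2]
      have p6 : 2 * ((T.card:ℤ) * l) ≤ 2 * ((r:ℤ) - 1) * l := by
        have h := mul_le_mul_of_nonneg_right ft hl0
        linarith only [h]
      have q3 : (1:ℤ) ≤ (r:ℤ) - 1 := by linarith only [f8]
      have q4 : (2:ℤ) ≤ (l:ℤ) := by linarith only [f8, f9]
      have q6 : (1:ℤ) * 1 ≤ ((r:ℤ) - 1) * ((r:ℤ) - 1) :=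
        mul_le_mul q3 q3 zero_le_one (by linarith only [f8])
      have q7 : (4:ℤ) ≤ 2 * (l:ℤ) := by linarith only [q4]
      have q5' : (4:ℤ) * 1 ≤ (2 * (l:ℤ)) * (((r:ℤ) - 1) * ((r:ℤ) - 1)) :=
        mul_le_mul q7 (by linarith only [q6]) zero_le_one (by linarith only [q4])
      have p7 : ((r:ℤ) - 1) * (r - 1) * (2 * r * l) + 2 * ((r:ℤ) - 1) * l + 1
          ≤ ((r:ℤ) * r - r) * (2 * r * l) := by linarith only [q5']
      have hB0 : (0:ℤ) ≤ 2 * (r:ℤ) * ((r:ℤ) * BS) :=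
        mul_nonneg (mul_nonneg (by norm_num) hr0) (mul_nonneg hr0 hBS0)
      linarith only [p0, p1, p2, p3, p4, p5, p6, p7, hB0]
    have hk1' : k = 1 := by omega
    obtain ⟨i0, hS1⟩ := Finset.card_eq_one.mp (show S.card = 1 by omega)
    have hi0S : i0 ∈ S := by rw [hS1]; exact Finset.mem_singleton_self i0
    have hBSi : BS = b i0 := by rw [hBS, hS1, Finset.sum_singleton]
    have hTcard : T.card = r := by omega
    have hPQ1 : C * l + r * b i0 = CT * l + BT := by
      rw [hk1', hBSi] at hPQ
      omega
    have hBTl : BT ≤ l := le_trans hBTd (by rw [hTcard]; exact hrd)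
    have hBTr : r ≤ BT := by omega
    have hrb0l : r * b i0 ≤ l := le_trans (Nat.mul_le_mul_left r (hbd i0)) hrd
    have hrb0r : r ≤ r * b i0 := Nat.le_mul_of_pos_right r (hb1 i0)
    have hBTeq : BT = r * b i0 := by
      have hz : (C:ℤ) * l + (r:ℤ) * (b i0) = (CT:ℤ) * l + BT := by exact_mod_cast hPQ1
      have hdd : (l:ℤ) ∣ ((r:ℤ) * (b i0) - BT) := ⟨(CT:ℤ) - C, by linear_combination hz⟩
      have g1 : (r:ℤ) ≤ (r:ℤ) * (b i0) := by exact_mod_cast hrb0r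
      have g2 : (r:ℤ) * (b i0) ≤ l := by exact_mod_cast hrb0l
      have g3 : (r:ℤ) ≤ BT := by exact_mod_cast hBTr
      have g4 : (BT:ℤ) ≤ l := by exact_mod_cast hBTl
      have g5 : (2:ℤ) ≤ r := by exact_mod_cast hr
      have habs : |(r:ℤ) * (b i0) - BT| < l := by
        rw [abs_lt]
        constructor <;> linarith
      have h0 := Int.eq_zero_of_abs_lt_dvd hdd habs
      have : (BT:ℤ) = (r:ℤ) * (b i0) := by linarith
      exact_mod_cast this
    have hCTeq : CT = C := by
      have h4 : CT * l = C * l := by omega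
      exact Nat.eq_of_mul_eq_mul_right (by omega) h4
    -- apply hprop to deduce all b on T equal b i0
    have e : Fin r ≃ {x // x ∈ T} := (finCongr hTcard.symm).trans T.equivFin.symm
    obtain ⟨f, hf⟩ : ∃ f : ℕ → ℕ, f = fun i => if h : i < r then b (e ⟨i, h⟩) else b i0 :=
      ⟨_, rfl⟩
    have hfval : ∀ (i : ℕ) (h : i < r), f i = b (e ⟨i, h⟩) := by
      intro i h
      rw [hf]
      simp only [dif_pos h]
    have hfr : f r = b i0 := by
      rw [hf]
      simp only [dif_neg (lt_irrefl r)]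
    have hf1 : ∀ i ≤ r, f i ∈ D := by
      intro i _
      rw [hf]
      by_cases h : i < r
      · simp only [dif_pos h]; exact hbD _
      · simp only [dif_neg h]; exact hbD _
    have hfsum : ∑ i ∈ Finset.range r, f i = r * f r := by
      have h1 : ∑ i ∈ Finset.range r, f i = ∑ i : Fin r, f i :=
        (Fin.sum_univ_eq_sum_range f r).symm
      have h2 : ∀ i : Fin r, f i = b (e i) := by
        intro i
        rw [hfval i i.isLt]
      have h3 : ∑ i : Fin r, f i = ∑ i : Fin r, (fun x : {x // x ∈ T} => b x) (e i) :=
        Finset.sum_congr rfl (fun i _ => h2 i)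
      have h4 : ∑ i : Fin r, (fun x : {x // x ∈ T} => b x) (e i)
          = ∑ x : {x // x ∈ T}, b x := by
        simpa using Equiv.sum_comp e (fun x : {x // x ∈ T} => b ↑x)
      have h5 : ∑ x : {x // x ∈ T}, b (x : Fin (r+1)) = ∑ x ∈ T, b x :=
        Finset.sum_coe_sort T b
      rw [h1, h3, h4, h5, ← hBT, hfr, hBTeq]
    have hall := hprop f hf1 hfsum
    have hbT : ∀ j, j ∈ T → b j = b i0 := by
      intro j hj
      obtain ⟨j', hj'def⟩ : ∃ x, x = e.symm ⟨j, hj⟩ := ⟨_, rfl⟩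
      have h1 : f j'.val = b j := by
        rw [hfval j'.val j'.isLt]
        have h2 : (⟨j'.val, j'.isLt⟩ : Fin r) = j' := rfl
        rw [h2, hj'def, Equiv.apply_symm_apply]
      have h2 := hall j'.val (le_of_lt j'.isLt)
      have h3 := hall r le_rfl
      rw [hfr] at h3
      omega
    -- final assembly
    refine ⟨b i0, hbD i0, ?_⟩
    have huniv : (Finset.univ : Finset (Fin (r+1))) = S ∪ T := by
      rw [hSdef, hTdef, Finset.filter_union_filter_not_eq]
    have hspec_i0 : a i0
        = (N : ZMod N) - ((C * l : ℕ) : ZMod N) - ((r * b i0 : ℕ) : ZMod N) := by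
      have h1 : a i0 = (((a i0).val : ℕ) : ZMod N) := (ZMod.natCast_rightInverse (a i0)).symm
      rw [h1, hSform i0 hi0S, ← hspec_eq _ (hbd i0)]
    have himgT : T.image a = (Finset.range r).image
        (fun i => ((i * l + b i0 : ℕ) : ZMod N)) := by
      apply Finset.eq_of_subset_of_card_le
      · intro x hx
        obtain ⟨j, hj, rfl⟩ := Finset.mem_image.mp hx
        obtain ⟨hcj, hvj⟩ := hcr j ((hST j).mp hj)
        have h1 : a j = (((a j).val : ℕ) : ZMod N) := (ZMod.natCast_rightInverse (a j)).symm
        rw [h1, hvj, hbT j hj]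
        exact Finset.mem_image.mpr ⟨c j, Finset.mem_range.mpr hcj, rfl⟩
      · calc ((Finset.range r).image (fun i => ((i * l + b i0 : ℕ) : ZMod N))).card ≤ r :=
              le_trans Finset.card_image_le (by simp)
          _ = (T.image a).card := by rw [Finset.card_image_of_injective T hinj, hTcard]
    rw [huniv, Finset.image_union, hS1, Finset.image_singleton, hspec_i0, himgT, hAb]
    exact Finset.union_comm _ _
  · rintro ⟨bb, hbbD, him⟩
    have hbb1 : 1 ≤ bb := (Finset.mem_Icc.mp (hD hbbD)).1
    have hbbd : bb ≤ d := (Finset.mem_Icc.mp (hD hbbD)).2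
    have hinj' : ∀ x ∈ (Finset.univ : Finset (Fin (r+1))), ∀ y ∈ Finset.univ,
        a x = a y → x = y := fun x _ y _ h => hinj h
    have hsum1 : ∑ i, a i = ∑ x ∈ Finset.univ.image a, (id x : ZMod N) := (Finset.sum_image (f := id) hinj').symm
    rw [hsum1, him, hAb]
    have hnotmem : (N : ZMod N) - ((C*l : ℕ) : ZMod N) - ((r*bb : ℕ) : ZMod N) ∉
        (Finset.range r).image fun i => ((i * l + bb : ℕ) : ZMod N) := by
      rw [hspec_eq bb hbbd]
      intro hmem'
      obtain ⟨c, hc, hcc⟩ := Finset.mem_image.mp hmem'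
      have h1 := hsmall_val c bb (Finset.mem_range.mp hc) hbbd
      rw [hcc, hspec_val bb hbb1 hbbd] at h1
      have h2 := hspec_big bb hbb1 hbbd
      have h3 := hsmall_lt c bb (Finset.mem_range.mp hc) hbbd
      omega
    rw [Finset.sum_union (Finset.disjoint_singleton_right.mpr hnotmem), Finset.sum_singleton]
    have himginj : ∀ x ∈ Finset.range r, ∀ y ∈ Finset.range r,
        ((x*l+bb : ℕ) : ZMod N) = ((y*l+bb : ℕ) : ZMod N) → x = y := by
      intro x hx y hy hxy
      have h1 := hsmall_val x bb (Finset.mem_range.mp hx) hbbd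
      have h2 := hsmall_val y bb (Finset.mem_range.mp hy) hbbd
      rw [hxy, h2] at h1
      have h3 : x * l = y * l := by omega
      exact Nat.eq_of_mul_eq_mul_right (by omega) h3
    rw [Finset.sum_image himginj]
    simp only [id_eq]
    have hcast : ∑ i ∈ Finset.range r, ((i*l+bb : ℕ) : ZMod N)
        = ((C*l + r*bb : ℕ) : ZMod N) := by
      rw [← Nat.cast_sum, hgauss bb]
    rw [hcast]
    have hNN : (N : ZMod N) = 0 := ZMod.natCast_self N
    rw [hNN]
    push_cast
    ring
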